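/- In the 3-node connected Kripke model with nodes a, c below a common top node b, where a forces only atom p, c forces only atom q, and b forces both p and q, every formula θ built from p, q, ⊤ using only ¬, ∨, → satisfies: if b forces θ then a forces θ or c forces θ. -/
import Mathlib


inductive Fm (α : Type) : Type where
  | top  : Fm α
  | atom : α → Fm α
  | neg  : Fm α → Fm α
  | and  : Fm α → Fm α → Fm α
  | or   : Fm α → Fm α → Fm α
  | imp  : Fm α → Fm α → Fm α

structure KripkeModel (α : Type) : Type 1 where
  K : Type
  le : K → K → Prop
  refl : ∀ k, le k k
  trans : ∀ {a b c}, le a b → le b c → le a c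
  antisymm : ∀ {a b}, le a b → le b a → a = b
  val : K → α → Prop
  persist : ∀ {k k' p}, le k k' → val k p → val k' p

def force {α : Type} (M : KripkeModel α) : M.K → Fm α → Prop
  | _, .top => True
  | k, .atom p => M.val k p
  | k, .neg φ => ∀ k', M.le k k' → ¬ force M k' φ
  | k, .and φ ψ => force M k φ ∧ force M k ψ
  | k, .or φ ψ => force M k φ ∨ force M k ψ
  | k, .imp φ ψ => ∀ k', M.le k k' → force M k' φ → force M k' ψ

/-- ∧-free formulas: built using only ¬, ∨, →, ⊤ and atoms. -/
def NoAnd {α : Type} : Fm α → Prop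
  | .top => True
  | .atom _ => True
  | .neg φ => NoAnd φ
  | .and _ _ => False
  | .or φ ψ => NoAnd φ ∧ NoAnd ψ
  | .imp φ ψ => NoAnd φ ∧ NoAnd ψ

/-- The connected 3-node Kripke model with nodes a = 0, b = 1, c = 2; order the
reflexive closure of a ≺ b, c ≺ b; atoms p = 0, q = 1; a ⊩ p, b ⊩ p,q, c ⊩ q. -/
def M11 : KripkeModel (Fin 2) where
  K := Fin 3
  le := fun x y => x = y ∨ (x = 0 ∧ y = 1) ∨ (x = 2 ∧ y = 1)
  refl := by decide
  trans := by decide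
  antisymm := by decide
  val := fun k p => (k = 0 ∧ p = 0) ∨ k = 1 ∨ (k = 2 ∧ p = 1)
  persist := by decide

theorem force_persist {α : Type} (M : KripkeModel α) (θ : Fm α) :
    ∀ k k', M.le k k' → force M k θ → force M k' θ := by
  induction θ with
  | top => intro _ _ _ _; trivial
  | atom p => intro k k' h hf; exact M.persist h hf
  | neg φ ih => intro k k' h hf k'' h'' ; exact hf k'' (M.trans h h'')
  | and φ ψ ih1 ih2 => intro k k' h hf; exact ⟨ih1 k k' h hf.1, ih2 k k' h hf.2⟩
  | or φ ψ ih1 ih2 =>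
    intro k k' h hf
    rcases hf with hf | hf
    · exact Or.inl (ih1 k k' h hf)
    · exact Or.inr (ih2 k k' h hf)
  | imp φ ψ ih1 ih2 => intro k k' h hf k'' h'' hφ; exact hf k'' (M.trans h h'') hφ

/-- In the model M11, every ∧-free formula θ in atoms p, q forced at the top
node b is forced at a or at c. -/
theorem no_and_force_down (θ : Fm (Fin 2)) (hθ : NoAnd θ)
    (hb : force M11 (1 : Fin 3) θ) :
    force M11 (0 : Fin 3) θ ∨ force M11 (2 : Fin 3) θ := by
  induction θ with
  | top => exact Or.inl trivial
  | atom p =>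
    fin_cases p
    · exact Or.inl (Or.inl ⟨rfl, rfl⟩)
    · exact Or.inr (Or.inr (Or.inr ⟨rfl, rfl⟩))
  | neg φ ih =>
    left
    intro k' hk hφ
    rcases hk with rfl | ⟨_, rfl⟩ | ⟨h, _⟩
    · exact hb ((1 : Fin 3) : M11.K) (Or.inl rfl) (force_persist _ _ _ _ (Or.inr (Or.inl ⟨rfl, rfl⟩)) hφ)
    · exact hb ((1 : Fin 3) : M11.K) (Or.inl rfl) hφ
    · exact absurd h (by decide)
  | and φ ψ ih1 ih2 => exact absurd hθ (by simp [NoAnd])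
  | or φ ψ ih1 ih2 =>
    rcases hb with h | h
    · rcases ih1 hθ.1 h with h' | h'
      · exact Or.inl (Or.inl h')
      · exact Or.inr (Or.inl h')
    · rcases ih2 hθ.2 h with h' | h'
      · exact Or.inl (Or.inr h')
      · exact Or.inr (Or.inr h')
  | imp φ ψ ih1 ih2 =>
    by_cases ha : force M11 (0 : Fin 3) (Fm.imp φ ψ)
    · exact Or.inl ha
    · simp only [force, not_forall] at ha
      obtain ⟨k', hk, hφ, hψ⟩ := ha
      rcases hk with rfl | ⟨_, rfl⟩ | ⟨h, _⟩
      · -- k' = a : a forces φ, not ψ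
        have hbφ : force M11 (1 : Fin 3) φ :=
          force_persist _ _ _ _ (Or.inr (Or.inl ⟨rfl, rfl⟩)) hφ
        have hbψ : force M11 (1 : Fin 3) ψ := hb ((1 : Fin 3) : M11.K) (Or.inl rfl) hbφ
        rcases ih2 hθ.2 hbψ with h' | h'
        · exact absurd h' hψ
        · right
          intro k'' hk'' _
          rcases hk'' with rfl | ⟨h, _⟩ | ⟨_, rfl⟩
          · exact h'
          · exact absurd h (by decide)
          · exact hbψ
      · exact absurd (hb ((1 : Fin 3) : M11.K) (Or.inl rfl) hφ) hψ
      · exact absurd h (by decide)
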